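/- Let (L, [·,·], Δ) be a Lie superbialgebra and let β : L → L be an even linear map which is a morphism of Lie superbialgebras (β∘[·,·] = [·,·]∘β^{⊗2} and Δ∘β = β^{⊗2}∘Δ). Then L_β = (L, β∘[·,·], Δ∘β, β) is a multiplicative Hom-Lie superbialgebra. -/
import Mathlib


open TensorProduct

variable (K : Type*) [Field K] [CharZero K]

/-- The super sign `(-1)^{p·q}` for parities `p q : ZMod 2`. -/
def eps (p q : ZMod 2) : K := (-1 : K) ^ (p.val * q.val)

variable {K}

section Defs

variable {L M : Type*} [AddCommGroup L] [Module K L] [AddCommGroup M] [Module K M]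

/-- `x` is homogeneous of parity `p` with respect to the grading involution `σ`
(`σ` acts as `(-1)^i` on the degree-`i` part of the `ℤ₂`-graded space). -/
def IsHomog (σ : L →ₗ[K] L) (p : ZMod 2) (x : L) : Prop :=
  σ x = ((-1 : K) ^ p.val) • x

/-- The operator multiplying a homogeneous element of parity `q` by `(-1)^{p·q}`. -/
noncomputable def signPow (σ : L →ₗ[K] L) (p : ZMod 2) : L →ₗ[K] L :=
  ((2 : K)⁻¹ * (1 + (-1 : K) ^ p.val)) • (LinearMap.id : L →ₗ[K] L)
    + ((2 : K)⁻¹ * (1 - (-1 : K) ^ p.val)) • σ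

/-- The operator multiplying `x ⊗ y` (with `x, y` homogeneous of parities `p, q`)
by the Koszul sign `(-1)^{p·q}`. -/
noncomputable def signOp (σL : L →ₗ[K] L) (σM : M →ₗ[K] M) :
    L ⊗[K] M →ₗ[K] L ⊗[K] M :=
  (2 : K)⁻¹ • ((LinearMap.id : L ⊗[K] M →ₗ[K] L ⊗[K] M)
    + TensorProduct.map σL LinearMap.id
    + TensorProduct.map LinearMap.id σM
    - TensorProduct.map σL σM)

/-- The super twist `τ(x ⊗ y) = (-1)^{|x||y|} y ⊗ x`. -/
noncomputable def superTwist (σ : L →ₗ[K] L) : L ⊗[K] L →ₗ[K] L ⊗[K] L :=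
  (TensorProduct.comm K L L).toLinearMap ∘ₗ signOp σ σ

/-- The super cyclic map `ξ(x ⊗ y ⊗ z) = (-1)^{|x|(|y|+|z|)} y ⊗ z ⊗ x`. -/
noncomputable def superCyclic (σ : L →ₗ[K] L) :
    L ⊗[K] (L ⊗[K] L) →ₗ[K] L ⊗[K] (L ⊗[K] L) :=
  (TensorProduct.assoc K L L L).toLinearMap
    ∘ₗ (TensorProduct.comm K L (L ⊗[K] L)).toLinearMap
    ∘ₗ signOp σ (TensorProduct.map σ σ)

/-- The adjoint action `ad_x` on `L ⊗ L`, for `x` homogeneous of parity `p`: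
`ad_x(y₁ ⊗ y₂) = [x,y₁] ⊗ α(y₂) + (-1)^{|x||y₁|} α(y₁) ⊗ [x,y₂]`. -/
noncomputable def adT (σ : L →ₗ[K] L) (br : L →ₗ[K] L →ₗ[K] L) (α : L →ₗ[K] L)
    (p : ZMod 2) (x : L) : L ⊗[K] L →ₗ[K] L ⊗[K] L :=
  TensorProduct.map (br x) α + TensorProduct.map (α ∘ₗ signPow σ p) (br x)

/-- The adjoint action `ad_x` on `L ⊗ (L ⊗ L)`, for `x` homogeneous of parity `p`. -/
noncomputable def adT3 (σ : L →ₗ[K] L) (br : L →ₗ[K] L →ₗ[K] L) (α : L →ₗ[K] L)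
    (p : ZMod 2) (x : L) :
    L ⊗[K] (L ⊗[K] L) →ₗ[K] L ⊗[K] (L ⊗[K] L) :=
  TensorProduct.map (br x) (TensorProduct.map α α)
    + TensorProduct.map (α ∘ₗ signPow σ p) (TensorProduct.map (br x) α)
    + TensorProduct.map (α ∘ₗ signPow σ p)
        (TensorProduct.map (α ∘ₗ signPow σ p) (br x))

/-- A Hom-Lie superalgebra `(L, [·,·], α)` with grading involution `σ`:
the bracket and `α` are even, the bracket is skew-supersymmetric and
satisfies the Hom-super-Jacobi identity. -/
def IsHomLieSuperalgebra (σ : L →ₗ[K] L) (br : L →ₗ[K] L →ₗ[K] L) (α : L →ₗ[K] L) : Prop :=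
  σ ∘ₗ σ = LinearMap.id
  ∧ (∀ x y, σ (br x y) = br (σ x) (σ y))
  ∧ (∀ x, σ (α x) = α (σ x))
  ∧ (∀ p q x y, IsHomog σ p x → IsHomog σ q y → br x y = -(eps K p q) • br y x)
  ∧ (∀ p q r x y z, IsHomog σ p x → IsHomog σ q y → IsHomog σ r z →
      eps K p r • br (α x) (br y z) + eps K r q • br (α z) (br x y)
        + eps K q p • br (α y) (br z x) = 0)

/-- Multiplicativity: `α([x,y]) = [α(x), α(y)]`. -/
def IsMultiplicative (br : L →ₗ[K] L →ₗ[K] L) (α : L →ₗ[K] L) : Prop :=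
  ∀ x y, α (br x y) = br (α x) (α y)

/-- A Hom-Lie supercoalgebra `(L, Δ, α)` with grading involution `σ`. -/
def IsHomLieSupercoalgebra (σ α : L →ₗ[K] L) (Δ : L →ₗ[K] L ⊗[K] L) : Prop :=
  σ ∘ₗ σ = LinearMap.id
  ∧ (∀ x, σ (α x) = α (σ x))
  ∧ TensorProduct.map σ σ ∘ₗ Δ = Δ ∘ₗ σ
  ∧ (∀ x, ∃ u, Δ x = u - superTwist σ u)
  ∧ (LinearMap.id + superCyclic σ + superCyclic σ ∘ₗ superCyclic σ)
      ∘ₗ TensorProduct.map α Δ ∘ₗ Δ = 0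

/-- Co-multiplicativity: `Δ ∘ α = α^{⊗2} ∘ Δ`. -/
def IsComultiplicative (α : L →ₗ[K] L) (Δ : L →ₗ[K] L ⊗[K] L) : Prop :=
  Δ ∘ₗ α = TensorProduct.map α α ∘ₗ Δ

/-- A Hom-Lie superbialgebra `(L, [·,·], Δ, α)`. -/
def IsHomLieSuperbialgebra (σ : L →ₗ[K] L) (br : L →ₗ[K] L →ₗ[K] L) (α : L →ₗ[K] L)
    (Δ : L →ₗ[K] L ⊗[K] L) : Prop :=
  IsHomLieSuperalgebra σ br α
  ∧ IsHomLieSupercoalgebra σ α Δ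
  ∧ ∀ p q x y, IsHomog σ p x → IsHomog σ q y →
      Δ (br x y) = adT σ br α p (α x) (Δ y) - eps K p q • adT σ br α q (α y) (Δ x)

/-- A multiplicative Hom-Lie superbialgebra. -/
def IsMultHomLieSuperbialgebra (σ : L →ₗ[K] L) (br : L →ₗ[K] L →ₗ[K] L) (α : L →ₗ[K] L)
    (Δ : L →ₗ[K] L ⊗[K] L) : Prop :=
  IsHomLieSuperbialgebra σ br α Δ ∧ IsMultiplicative br α ∧ IsComultiplicative α Δ

/-- An admissible Hom-Lie superalgebra: `[(Id - α²)(x), α(y)] = 0`. -/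
def IsAdmissible (σ : L →ₗ[K] L) (br : L →ₗ[K] L →ₗ[K] L) (α : L →ₗ[K] L) : Prop :=
  IsHomLieSuperalgebra σ br α ∧ ∀ x y, br (x - α (α x)) (α y) = 0

/-- A morphism of Hom-Lie superbialgebras: an even linear map commuting with the
twist maps, the brackets and the cobrackets. -/
def IsBialgMorphism {L₂ : Type*} [AddCommGroup L₂] [Module K L₂]
    (σ₁ : L →ₗ[K] L) (br₁ : L →ₗ[K] L →ₗ[K] L) (α₁ : L →ₗ[K] L) (Δ₁ : L →ₗ[K] L ⊗[K] L)
    (σ₂ : L₂ →ₗ[K] L₂) (br₂ : L₂ →ₗ[K] L₂ →ₗ[K] L₂) (α₂ : L₂ →ₗ[K] L₂)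
    (Δ₂ : L₂ →ₗ[K] L₂ ⊗[K] L₂) (f : L →ₗ[K] L₂) : Prop :=
  (∀ x, σ₂ (f x) = f (σ₁ x)) ∧ (∀ x, α₂ (f x) = f (α₁ x))
  ∧ (∀ x y, f (br₁ x y) = br₂ (f x) (f y))
  ∧ TensorProduct.map f f ∘ₗ Δ₁ = Δ₂ ∘ₗ f

/-- A representation `ρ` of the Hom-Lie superalgebra `(L, br, αg)` on `(M, σM)`
with respect to `A`. -/
def IsRepresentation (σg : L →ₗ[K] L) (br : L →ₗ[K] L →ₗ[K] L) (αg : L →ₗ[K] L)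
    (σM A : M →ₗ[K] M) (ρ : L →ₗ[K] M →ₗ[K] M) : Prop :=
  (∀ x v, σM (ρ x v) = ρ (σg x) (σM v))
  ∧ (∀ x, ρ (αg x) ∘ₗ A = A ∘ₗ ρ x)
  ∧ (∀ p q x y, IsHomog σg p x → IsHomog σg q y →
      ρ (br x y) ∘ₗ A = ρ (αg x) ∘ₗ ρ y - eps K p q • (ρ (αg y) ∘ₗ ρ x))

/-- The signed middle-four interchange
`(r₁ ⊗ r₂) ⊗ (r₁' ⊗ r₂') ↦ (-1)^{|r₂||r₁'|} (r₁ ⊗ r₁') ⊗ (r₂ ⊗ r₂')`. -/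
noncomputable def signedMidSwap (σ : L →ₗ[K] L) :
    (L ⊗[K] L) ⊗[K] (L ⊗[K] L) →ₗ[K] (L ⊗[K] L) ⊗[K] (L ⊗[K] L) :=
  (TensorProduct.assoc K (L ⊗[K] L) L L).toLinearMap
    ∘ₗ TensorProduct.map (TensorProduct.assoc K L L L).symm.toLinearMap LinearMap.id
    ∘ₗ TensorProduct.map (TensorProduct.map LinearMap.id (superTwist σ)) LinearMap.id
    ∘ₗ TensorProduct.map (TensorProduct.assoc K L L L).toLinearMap LinearMap.id
    ∘ₗ (TensorProduct.assoc K (L ⊗[K] L) L L).symm.toLinearMap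

/-- `[r₁₂, r'₁₃] = Σ (-1)^{|r'₁||r₂|} [r₁,r'₁] ⊗ α(r₂) ⊗ α(r'₂)`. -/
noncomputable def br1213 (σ : L →ₗ[K] L) (br : L →ₗ[K] L →ₗ[K] L) (α : L →ₗ[K] L)
    (r r' : L ⊗[K] L) : L ⊗[K] (L ⊗[K] L) :=
  TensorProduct.map (TensorProduct.lift br) (TensorProduct.map α α)
    (signedMidSwap σ (r ⊗ₜ[K] r'))

/-- `[r₁₂, r'₂₃] = Σ α(r₁) ⊗ [r₂,r'₁] ⊗ α(r'₂)`. -/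
noncomputable def br1223 (br : L →ₗ[K] L →ₗ[K] L) (α : L →ₗ[K] L)
    (r r' : L ⊗[K] L) : L ⊗[K] (L ⊗[K] L) :=
  TensorProduct.map α
      (TensorProduct.map (TensorProduct.lift br) α
        ∘ₗ (TensorProduct.assoc K L L L).symm.toLinearMap)
    ((TensorProduct.assoc K L L (L ⊗[K] L)).toLinearMap (r ⊗ₜ[K] r'))

/-- `[r₁₃, r'₂₃] = Σ (-1)^{|r'₁||r₂|} α(r₁) ⊗ α(r'₁) ⊗ [r₂,r'₂]`. -/
noncomputable def br1323 (σ : L →ₗ[K] L) (br : L →ₗ[K] L →ₗ[K] L) (α : L →ₗ[K] L)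
    (r r' : L ⊗[K] L) : L ⊗[K] (L ⊗[K] L) :=
  (TensorProduct.assoc K L L L).toLinearMap
    (TensorProduct.map (TensorProduct.map α α) (TensorProduct.lift br)
      (signedMidSwap σ (r ⊗ₜ[K] r')))

/-- The left-hand side `[[r,r]]^α` of the classical Hom-Yang-Baxter equation. -/
noncomputable def chybeEl (σ : L →ₗ[K] L) (br : L →ₗ[K] L →ₗ[K] L) (α : L →ₗ[K] L)
    (r : L ⊗[K] L) : L ⊗[K] (L ⊗[K] L) :=
  br1213 σ br α r r + br1223 br α r r + br1323 σ br α r r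

/-- A coboundary Hom-Lie superbialgebra. -/
def IsCoboundary (σ : L →ₗ[K] L) (br : L →ₗ[K] L →ₗ[K] L) (α : L →ₗ[K] L)
    (Δ : L →ₗ[K] L ⊗[K] L) (r : L ⊗[K] L) : Prop :=
  IsHomLieSuperbialgebra σ br α Δ
  ∧ TensorProduct.map α α r = r
  ∧ ∀ p x, IsHomog σ p x → Δ x = adT σ br α p x r

/-- A quasi-triangular Hom-Lie superbialgebra: a coboundary one where `r`
satisfies the classical Hom-Yang-Baxter equation. -/
def IsQuasiTriangular (σ : L →ₗ[K] L) (br : L →ₗ[K] L →ₗ[K] L) (α : L →ₗ[K] L)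
    (Δ : L →ₗ[K] L ⊗[K] L) (r : L ⊗[K] L) : Prop :=
  IsCoboundary σ br α Δ r ∧ chybeEl σ br α r = 0

/-- The global linear map `x ↦ ad_x(r) = Σ [x,r₁] ⊗ α(r₂) + (-1)^{|x||r₁|} α(r₁) ⊗ [x,r₂]`. -/
noncomputable def adMap (σ : L →ₗ[K] L) (br : L →ₗ[K] L →ₗ[K] L) (α : L →ₗ[K] L)
    (r : L ⊗[K] L) : L →ₗ[K] L ⊗[K] L :=
  (TensorProduct.map (TensorProduct.lift br) α
      ∘ₗ (TensorProduct.assoc K L L L).symm.toLinearMap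
    + TensorProduct.map α (TensorProduct.lift br)
        ∘ₗ (TensorProduct.assoc K L L L).toLinearMap
        ∘ₗ TensorProduct.map (superTwist σ) LinearMap.id
        ∘ₗ (TensorProduct.assoc K L L L).symm.toLinearMap)
  ∘ₗ (TensorProduct.mk K L (L ⊗[K] L)).flip r

end Defs

section YauAux

variable {K : Type*} [Field K] [CharZero K] {L : Type*} [AddCommGroup L] [Module K L]

lemma isHomog_beta (σ β : L →ₗ[K] L) (hβσ : ∀ x, σ (β x) = β (σ x))
    {p : ZMod 2} {x : L} (h : IsHomog σ p x) : IsHomog σ p (β x) := by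
  unfold IsHomog at *
  rw [hβσ, h, map_smul]

lemma signPow_beta (σ β : L →ₗ[K] L) (hβσ : ∀ x, σ (β x) = β (σ x))
    (p : ZMod 2) (x : L) : signPow σ p (β x) = β (signPow σ p x) := by
  simp [signPow, hβσ, map_add, map_smul]

lemma adT_twist (σ β : L →ₗ[K] L) (br : L →ₗ[K] L →ₗ[K] L)
    (hβσ : ∀ x, σ (β x) = β (σ x)) (hβbr : ∀ x y, β (br x y) = br (β x) (β y))
    (p : ZMod 2) (x : L) :
    adT σ (br.compr₂ β) β p (β x) ∘ₗ TensorProduct.map β β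
      = TensorProduct.map (β ∘ₗ β) (β ∘ₗ β) ∘ₗ adT σ br LinearMap.id p x := by
  apply TensorProduct.ext'
  intro a b
  simp only [LinearMap.comp_apply, TensorProduct.map_tmul, adT, LinearMap.add_apply,
    LinearMap.compr₂_apply, LinearMap.id_coe, id_eq]
  rw [signPow_beta σ β hβσ, ← hβbr, ← hβbr]
  simp [hβbr]

lemma ext3 {M : Type*} [AddCommGroup M] [Module K M]
    {f g : L ⊗[K] (L ⊗[K] L) →ₗ[K] M}
    (h : ∀ x y z : L, f (x ⊗ₜ[K] (y ⊗ₜ[K] z)) = g (x ⊗ₜ[K] (y ⊗ₜ[K] z))) : f = g := by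
  apply TensorProduct.ext'
  intro x t
  induction t using TensorProduct.induction_on with
  | zero => simp [TensorProduct.tmul_zero]
  | tmul y z => exact h x y z
  | add t1 t2 h1 h2 => rw [TensorProduct.tmul_add, map_add, map_add, h1, h2]

lemma superCyclic_tmul (σ : L →ₗ[K] L) (x y z : L) :
    superCyclic σ (x ⊗ₜ[K] (y ⊗ₜ[K] z))
      = (2 : K)⁻¹ • (y ⊗ₜ[K] (z ⊗ₜ[K] x) + y ⊗ₜ[K] (z ⊗ₜ[K] σ x)
          + σ y ⊗ₜ[K] (σ z ⊗ₜ[K] x) - σ y ⊗ₜ[K] (σ z ⊗ₜ[K] σ x)) := by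
  simp [superCyclic, signOp, LinearMap.sub_apply, LinearMap.add_apply,
    TensorProduct.map_tmul, map_add, map_sub, map_smul, TensorProduct.comm_tmul,
    TensorProduct.assoc_tmul]

lemma superCyclic_beta (σ β : L →ₗ[K] L) (hβσ : ∀ x, σ (β x) = β (σ x)) :
    superCyclic σ ∘ₗ TensorProduct.map β (TensorProduct.map β β)
      = TensorProduct.map β (TensorProduct.map β β) ∘ₗ superCyclic σ := by
  apply ext3
  intro x y z
  simp only [LinearMap.comp_apply, TensorProduct.map_tmul, superCyclic_tmul,
    map_smul, map_add, map_sub, hβσ]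

theorem lieSuperbialgebra_yau_twist'
    (σ : L →ₗ[K] L) (br : L →ₗ[K] L →ₗ[K] L) (Δ : L →ₗ[K] L ⊗[K] L)
    (β : L →ₗ[K] L)
    (hbi : IsHomLieSuperbialgebra σ br (LinearMap.id : L →ₗ[K] L) Δ)
    (hβσ : ∀ x, σ (β x) = β (σ x))
    (hβbr : ∀ x y, β (br x y) = br (β x) (β y))
    (hβΔ : TensorProduct.map β β ∘ₗ Δ = Δ ∘ₗ β) :
    IsMultHomLieSuperbialgebra σ (br.compr₂ β) β (Δ ∘ₗ β) := by
  obtain ⟨⟨hσσ, hσbr, _, hskew, hjac⟩, ⟨_, _, hcoσ, hcosk, hcojac⟩, hcompat⟩ := hbi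
  have hd : ∀ z, Δ (β z) = TensorProduct.map β β (Δ z) :=
    fun z => (LinearMap.congr_fun hβΔ z).symm
  set B3 := TensorProduct.map β (TensorProduct.map β β) with hB3
  refine ⟨⟨⟨hσσ, ?_, ?_, ?_, ?_⟩, ⟨hσσ, fun x => hβσ x, ?_, ?_, ?_⟩, ?_⟩, ?_, ?_⟩
  · -- σ commutes with new bracket
    intro x y
    simp only [LinearMap.compr₂_apply]
    rw [hβσ, hσbr]
  · -- σ commutes with β
    exact fun x => hβσ x
  · -- skew
    intro p q x y hx hy
    simp only [LinearMap.compr₂_apply]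
    rw [hskew p q x y hx hy]
    simp
  · -- Jacobi
    intro p q r x y z hx hy hz
    have h := congrArg β (hjac p q r (β x) (β y) (β z)
      (isHomog_beta σ β hβσ hx) (isHomog_beta σ β hβσ hy) (isHomog_beta σ β hβσ hz))
    simp only [map_add, map_smul, map_zero, LinearMap.id_coe, id_eq, hβbr] at h
    simp only [LinearMap.compr₂_apply, hβbr]
    exact h
  · -- map σ σ ∘ (Δ∘β) = (Δ∘β)∘σ
    apply LinearMap.ext
    intro x
    have h := LinearMap.congr_fun hcoσ (β x)
    simp only [LinearMap.comp_apply] at h ⊢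
    rw [h, hβσ]
  · -- coskew
    intro x
    exact hcosk (β x)
  · -- cojacobi
    have key : TensorProduct.map LinearMap.id Δ ∘ₗ TensorProduct.map β β
        = B3 ∘ₗ TensorProduct.map LinearMap.id Δ := by
      rw [hB3, ← TensorProduct.map_comp, ← TensorProduct.map_comp,
        LinearMap.id_comp, LinearMap.comp_id, ← hβΔ]
    have hcomξ := superCyclic_beta σ β hβσ
    apply LinearMap.ext
    intro x
    simp only [LinearMap.comp_apply, LinearMap.zero_apply]
    rw [hd x]
    have e1 : TensorProduct.map β (Δ ∘ₗ β) = B3 ∘ₗ TensorProduct.map LinearMap.id Δ := by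
      rw [hB3, ← hβΔ, ← TensorProduct.map_comp, LinearMap.comp_id]
    rw [e1]
    simp only [LinearMap.comp_apply]
    rw [← LinearMap.comp_apply (TensorProduct.map LinearMap.id Δ), key]
    simp only [LinearMap.comp_apply]
    have hcomξ' : ∀ t, superCyclic σ (B3 t) = B3 (superCyclic σ t) :=
      fun t => LinearMap.congr_fun hcomξ t
    have h0 := LinearMap.congr_fun hcojac x
    simp only [LinearMap.comp_apply, LinearMap.add_apply, LinearMap.id_coe, id_eq,
      LinearMap.zero_apply] at h0 ⊢
    rw [hcomξ', hcomξ', hcomξ', hcomξ']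
    rw [← map_add, ← map_add, ← map_add, ← map_add, h0, map_zero, map_zero]
  · -- compatibility
    intro p q x y hx hy
    have htw : ∀ (p' : ZMod 2) (x' : L) (t : L ⊗[K] L),
        adT σ (br.compr₂ β) β p' (β x') (TensorProduct.map β β t)
          = TensorProduct.map β β (TensorProduct.map β β (adT σ br LinearMap.id p' x' t)) := by
      intro p' x' t
      have := LinearMap.congr_fun (adT_twist σ β br hβσ hβbr p' x') t
      simp only [LinearMap.comp_apply] at this
      rw [this, TensorProduct.map_comp, LinearMap.comp_apply]
    simp only [LinearMap.comp_apply, LinearMap.compr₂_apply]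
    rw [hβbr, ← hβbr, hd, hd (br x y), hcompat p q x y hx hy, hd, hd, htw, htw,
      map_sub, map_sub, map_smul, map_smul]
    simp
  · -- multiplicative
    intro x y
    simp only [LinearMap.compr₂_apply, hβbr]
  · -- comultiplicative
    apply LinearMap.ext
    intro x
    simp only [LinearMap.comp_apply]
    rw [hd, hd]

end YauAux

/-- Twisting a Lie superbialgebra by an endomorphism yields a
multiplicative Hom-Lie superbialgebra. -/
theorem lieSuperbialgebra_yau_twist
    {K : Type*} [Field K] [CharZero K] {L : Type*} [AddCommGroup L] [Module K L]
    (σ : L →ₗ[K] L) (br : L →ₗ[K] L →ₗ[K] L) (Δ : L →ₗ[K] L ⊗[K] L)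
    (β : L →ₗ[K] L)
    (hbi : IsHomLieSuperbialgebra σ br (LinearMap.id : L →ₗ[K] L) Δ)
    (hβσ : ∀ x, σ (β x) = β (σ x))
    (hβbr : ∀ x y, β (br x y) = br (β x) (β y))
    (hβΔ : TensorProduct.map β β ∘ₗ Δ = Δ ∘ₗ β) :
    IsMultHomLieSuperbialgebra σ (br.compr₂ β) β (Δ ∘ₗ β) :=
  lieSuperbialgebra_yau_twist' σ br Δ β hbi hβσ hβbr hβΔ
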